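/- arXiv:0802.3248 — 3 statements merged into one kernel-verified Lean document; each statement's English description precedes it below -/
import Mathlib

section
/- If z is an eigenvalue of the block matrix M = [[A, B],[C, D]] with eigenvector (f, g), z is not an eigenvalue of D, and S(z) = A - zI - B(D - z)⁻¹C = φ(z)(M₀ - R(z)I) with φ(z) ≠ 0, then R(z) is an eigenvalue of M₀ with eigenvector f; conversely, if M₀ f = R(z) f then setting g = -(D - z)⁻¹ C f produces an eigenvector (f, g) of M with eigenvalue z. -/
theorem spectral_similarity_eigenvalue_correspondence (k m : ℕ)
    (A M₀ : Matrix (Fin k) (Fin k) ℝ) (B : Matrix (Fin k) (Fin m) ℝ)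
    (C : Matrix (Fin m) (Fin k) ℝ) (D : Matrix (Fin m) (Fin m) ℝ)
    (z φ R : ℝ) (hφ : φ ≠ 0)
    (hD : ∀ g : Fin m → ℝ, D.mulVec g = z • g → g = 0)
    (hDinv : IsUnit (D - z • (1 : Matrix (Fin m) (Fin m) ℝ)))
    (hschur : A - z • (1 : Matrix (Fin k) (Fin k) ℝ) -
        B * (D - z • (1 : Matrix (Fin m) (Fin m) ℝ))⁻¹ * C =
      φ • (M₀ - R • (1 : Matrix (Fin k) (Fin k) ℝ))) :
    (∀ f : Fin k → ℝ, ∀ g : Fin m → ℝ, (f ≠ 0 ∨ g ≠ 0) →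
        A.mulVec f + B.mulVec g = z • f → C.mulVec f + D.mulVec g = z • g →
        f ≠ 0 ∧ M₀.mulVec f = R • f) ∧
    (∀ f : Fin k → ℝ, f ≠ 0 → M₀.mulVec f = R • f →
        let g := -((D - z • (1 : Matrix (Fin m) (Fin m) ℝ))⁻¹.mulVec (C.mulVec f))
        A.mulVec f + B.mulVec g = z • f ∧ C.mulVec f + D.mulVec g = z • g) := by
  set E : Matrix (Fin m) (Fin m) ℝ := D - z • 1 with hE
  have hdet : IsUnit E.det := (Matrix.isUnit_iff_isUnit_det E).mp hDinv
  have hEinv : E * E⁻¹ = 1 := Matrix.mul_nonsing_inv E hdet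
  have hEinv' : E⁻¹ * E = 1 := Matrix.nonsing_inv_mul E hdet
  have hEmul : ∀ w : Fin m → ℝ, E.mulVec w = D.mulVec w - z • w := by
    intro w
    rw [hE, Matrix.sub_mulVec, Matrix.smul_mulVec, Matrix.one_mulVec]
  have key2 : ∀ f : Fin k → ℝ,
      C.mulVec f + D.mulVec (-(E⁻¹.mulVec (C.mulVec f))) =
        z • (-(E⁻¹.mulVec (C.mulVec f))) := by
    intro f
    set v := E⁻¹.mulVec (C.mulVec f) with hv
    have h1 : E.mulVec v = C.mulVec f := by
      rw [hv, Matrix.mulVec_mulVec, hEinv, Matrix.one_mulVec]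
    have h : D.mulVec v - z • v = C.mulVec f := by rw [← hEmul, h1]
    rw [Matrix.mulVec_neg, smul_neg, ← h]
    abel
  have key1 : ∀ f : Fin k → ℝ,
      A.mulVec f + B.mulVec (-(E⁻¹.mulVec (C.mulVec f))) - z • f =
        φ • (M₀.mulVec f - R • f) := by
    intro f
    have h1 : (A - z • (1 : Matrix (Fin k) (Fin k) ℝ) - B * E⁻¹ * C).mulVec f =
        A.mulVec f - z • f - B.mulVec (E⁻¹.mulVec (C.mulVec f)) := by
      rw [Matrix.sub_mulVec, Matrix.sub_mulVec, Matrix.smul_mulVec,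
        Matrix.one_mulVec, ← Matrix.mulVec_mulVec, ← Matrix.mulVec_mulVec]
    have h2 : (φ • (M₀ - R • (1 : Matrix (Fin k) (Fin k) ℝ))).mulVec f =
        φ • (M₀.mulVec f - R • f) := by
      rw [Matrix.smul_mulVec, Matrix.sub_mulVec, Matrix.smul_mulVec,
        Matrix.one_mulVec]
    rw [Matrix.mulVec_neg, ← h2, ← hschur, h1]
    abel
  constructor
  · intro f g hne hf1 hf2
    -- first: f ≠ 0
    have hf : f ≠ 0 := by
      intro hf0
      rcases hne with h | h
      · exact h hf0
      · apply h
        apply hD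
        rw [hf0, Matrix.mulVec_zero, zero_add] at hf2
        exact hf2
    refine ⟨hf, ?_⟩
    -- uniqueness of g
    set v := E⁻¹.mulVec (C.mulVec f) with hv
    have hEg : E.mulVec (g + v) = 0 := by
      have hg : E.mulVec g = -(C.mulVec f) := by
        rw [hEmul]
        have := hf2
        rw [eq_comm, ← sub_eq_iff_eq_add] at this
        linear_combination (norm := module) -this
      have hvv : E.mulVec v = C.mulVec f := by
        rw [hv, Matrix.mulVec_mulVec, hEinv, Matrix.one_mulVec]
      rw [Matrix.mulVec_add, hg, hvv]
      abel
    have hgv : g = -v := by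
      have : E⁻¹.mulVec (E.mulVec (g + v)) = 0 := by rw [hEg, Matrix.mulVec_zero]
      rw [Matrix.mulVec_mulVec, hEinv', Matrix.one_mulVec] at this
      rw [eq_neg_iff_add_eq_zero]
      exact this
    have := key1 f
    rw [← hgv] at this
    rw [hf1] at this
    have h0 : φ • (M₀.mulVec f - R • f) = 0 := by rw [← this]; abel
    rcases smul_eq_zero.mp h0 with h | h
    · exact absurd h hφ
    · rw [sub_eq_zero] at h; exact h
  · intro f hf hM
    refine ⟨?_, key2 f⟩
    have := key1 f
    rw [hM, sub_self, smul_zero, sub_eq_zero] at this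
    exact this
end

section
/- Let ψ(x) = (3 - √(9 - 4x))/4. For x in a sufficiently small neighborhood of 0 (e.g. |x| ≤ 1), the sequence 6ⁿ·ψⁿ(x) (n-fold composition) converges; the limit function Ψ satisfies Ψ(0) = 0. -/
open Real Filter

private lemma psi_props (y : ℝ) (hy : |y| ≤ 1) :
    |((3 - Real.sqrt (9 - 4 * y)) / 4)| ≤ |y| / 5 ∧
    6 * ((3 - Real.sqrt (9 - 4 * y)) / 4) - y =
      4 * ((3 - Real.sqrt (9 - 4 * y)) / 4) ^ 2 := by
  have hy1 : -1 ≤ y := neg_le_of_abs_le hy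
  have hy2 : y ≤ 1 := le_of_abs_le hy
  have h9 : (0:ℝ) ≤ 9 - 4 * y := by linarith
  set s := Real.sqrt (9 - 4 * y) with hs
  have hs2 : s ^ 2 = 9 - 4 * y := Real.sq_sqrt h9
  have hsge : 2 ≤ s := by nlinarith [Real.sqrt_nonneg (9 - 4 * y)]
  constructor
  · rw [abs_div, show |(4:ℝ)| = 4 by norm_num, div_le_div_iff₀ (by norm_num) (by norm_num)]
    have h1 : |3 - s| * (3 + s) = 4 * |y| := by
      rw [← abs_of_nonneg (show (0:ℝ) ≤ 3 + s by linarith), ← abs_mul,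
        show (3 - s) * (3 + s) = 4 * y by nlinarith, abs_mul]
      norm_num
    nlinarith [abs_nonneg (3 - s), abs_nonneg y]
  · nlinarith

theorem koenigs_linearization_limit_exists :
    let ψ : ℝ → ℝ := fun x => (3 - Real.sqrt (9 - 4 * x)) / 4
    (∀ x : ℝ, |x| ≤ 1 →
        ∃ L : ℝ, Filter.Tendsto (fun n : ℕ => 6 ^ n * ψ^[n] x) Filter.atTop (nhds L)) ∧
    Filter.Tendsto (fun n : ℕ => (6 : ℝ) ^ n * ψ^[n] 0) Filter.atTop (nhds 0) := by
  intro ψ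
  have hψ0 : ψ 0 = 0 := by
    show (3 - Real.sqrt (9 - 4 * 0)) / 4 = 0
    rw [show (9:ℝ) - 4 * 0 = 3 ^ 2 by norm_num, Real.sqrt_sq (by norm_num)]
    norm_num
  constructor
  · intro x hx
    have hiter : ∀ n, |ψ^[n] x| ≤ |x| / 5 ^ n := by
      intro n
      induction n with
      | zero => simp
      | succ n ih =>
        have hb : |ψ^[n] x| ≤ 1 := by
          refine ih.trans ?_
          rw [div_le_one (by positivity)]
          exact hx.trans (one_le_pow₀ (by norm_num))
        rw [Function.iterate_succ_apply']
        calc |ψ (ψ^[n] x)| ≤ |ψ^[n] x| / 5 := (psi_props _ hb).1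
          _ ≤ (|x| / 5 ^ n) / 5 := by
              apply div_le_div_of_nonneg_right ih (by norm_num) |>.trans_eq rfl
          _ = |x| / 5 ^ (n + 1) := by ring
    have hcauchy : CauchySeq (fun n : ℕ => (6:ℝ) ^ n * ψ^[n] x) := by
      apply cauchySeq_of_le_geometric (6/25) (4/25) (by norm_num)
      intro n
      have hy : |ψ^[n] x| ≤ 1 := by
        refine (hiter n).trans ?_
        rw [div_le_one (by positivity)]
        exact hx.trans (one_le_pow₀ (by norm_num))
      obtain ⟨h1, h2⟩ := psi_props (ψ^[n] x) hy
      have hψn : |ψ (ψ^[n] x)| ≤ 1 / 5 ^ (n + 1) := by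
        calc |ψ (ψ^[n] x)| ≤ |ψ^[n] x| / 5 := h1
          _ ≤ (|x| / 5 ^ n) / 5 := div_le_div_of_nonneg_right (hiter n) (by norm_num)
          _ ≤ (1 / 5 ^ n) / 5 := by
              apply div_le_div_of_nonneg_right _ (by norm_num)
              exact div_le_div_of_nonneg_right hx (by positivity)
          _ = 1 / 5 ^ (n + 1) := by ring
      rw [Real.dist_eq, abs_sub_comm]
      have key : (6:ℝ) ^ (n + 1) * ψ^[n + 1] x - 6 ^ n * ψ^[n] x
          = 6 ^ n * (4 * (ψ (ψ^[n] x)) ^ 2) := by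
        rw [Function.iterate_succ_apply']
        rw [← h2]; ring
      rw [key, abs_mul, abs_mul]
      have h6 : |(6:ℝ) ^ n| = 6 ^ n := abs_of_nonneg (by positivity)
      have hsq : |(ψ (ψ^[n] x)) ^ 2| ≤ (1 / 5 ^ (n + 1)) ^ 2 := by
        rw [abs_pow]
        exact pow_le_pow_left₀ (abs_nonneg _) hψn 2
      calc |(6:ℝ) ^ n| * (|(4:ℝ)| * |(ψ (ψ^[n] x)) ^ 2|)
          ≤ 6 ^ n * (4 * (1 / 5 ^ (n + 1)) ^ 2) := by
            rw [h6, show |(4:ℝ)| = 4 by norm_num]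
            have := mul_le_mul_of_nonneg_left hsq (show (0:ℝ) ≤ 4 by norm_num)
            exact mul_le_mul_of_nonneg_left this (by positivity)
        _ = 4 / 25 * (6 / 25) ^ n := by
            field_simp
            rw [show ((5:ℝ) ^ (n + 1)) ^ 2 = 25 ^ (n + 1) by
              rw [← pow_mul, mul_comm, pow_mul]; norm_num, pow_succ]
            rw [div_pow]
            field_simp
    obtain ⟨L, hL⟩ := cauchySeq_tendsto_of_complete hcauchy
    exact ⟨L, hL⟩
  · have : ∀ n : ℕ, ψ^[n] 0 = 0 := fun n => Function.iterate_fixed hψ0 n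
    simp only [this, mul_zero]
    exact tendsto_const_nhds
end

section
/- If R(z) = 6z - 4z² and λₙ₊₁ is chosen for each n with λₙ₊₁ ∈ R⁻¹(λₙ) via λₙ₊₁ = (3 + εₙ₊₁√(9 - 4λₙ))/4 with εₙ = ±1, and εₙ = -1 for all n ≥ n₀, with λ_{n₀} ∈ [0, 9/4], then the sequence 6ⁿλₙ converges as n → ∞. -/
private lemma psi_facts {x : ℝ} (hx0 : 0 ≤ x) (hx9 : x ≤ 9/4) :
    0 ≤ (3 - Real.sqrt (9 - 4*x))/4 ∧ (3 - Real.sqrt (9 - 4*x))/4 ≤ x/2 ∧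
    x ≤ 6 * ((3 - Real.sqrt (9 - 4*x))/4) := by
  have h9 : (0:ℝ) ≤ 9 - 4*x := by linarith
  set s := Real.sqrt (9 - 4*x) with hs
  have hs0 : 0 ≤ s := Real.sqrt_nonneg _
  have hs2 : s^2 = 9 - 4*x := Real.sq_sqrt h9
  have hs3 : s ≤ 3 := by nlinarith [sq_nonneg (s - 3)]
  refine ⟨by linarith, ?_, ?_⟩
  · nlinarith [mul_nonneg hs0 (by linarith : (0:ℝ) ≤ 3 - s)]
  · nlinarith [sq_nonneg (s - 3)]

private lemma psi_upper {x : ℝ} (hx0 : 0 ≤ x) (hx9 : x ≤ 3/4) :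
    6 * ((3 - Real.sqrt (9 - 4*x))/4) ≤ x + x^2 := by
  have h9 : (0:ℝ) ≤ 9 - 4*x := by linarith
  set s := Real.sqrt (9 - 4*x) with hs
  have hs0 : 0 ≤ s := Real.sqrt_nonneg _
  have hs2 : s^2 = 9 - 4*x := Real.sq_sqrt h9
  have hs3 : s ≤ 3 := by nlinarith [sq_nonneg (s - 3)]
  nlinarith [mul_nonneg (mul_nonneg (sq_nonneg (s - 3)) (by linarith : (0:ℝ) ≤ s + 1))
    (by linarith : (0:ℝ) ≤ s + 5)]

theorem spectral_decimation_eigenvalue_limit (lam : ℕ → ℝ) (n₀ : ℕ)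
    (h₀ : lam n₀ ∈ Set.Icc (0 : ℝ) (9 / 4))
    (hrec : ∀ n ≥ n₀, lam (n + 1) = (3 - Real.sqrt (9 - 4 * lam n)) / 4) :
    ∃ L : ℝ, Filter.Tendsto (fun n : ℕ => 6 ^ n * lam n) Filter.atTop (nhds L) := by
  obtain ⟨h0, h9⟩ := h₀
  set N := n₀ + 1 with hN
  -- invariance: lam n ∈ [0, 9/4] for n ≥ n₀
  have hinv : ∀ n ≥ n₀, 0 ≤ lam n ∧ lam n ≤ 9/4 := by
    intro n hn
    induction n with
    | zero => simpa [Nat.le_zero.mp hn] using And.intro h0 h9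
    | succ m ih =>
      rcases Nat.lt_or_ge m n₀ with h | h
      · have : n₀ = m + 1 := le_antisymm hn h
        rw [← this]; exact ⟨h0, h9⟩
      · obtain ⟨ih0, ih9⟩ := ih h
        rw [hrec m h]
        obtain ⟨a, b, _⟩ := psi_facts ih0 ih9
        exact ⟨a, by linarith⟩
  -- geometric decay from N on
  have hdecay : ∀ k : ℕ, lam (N + k) ≤ (3/4) * (1/2)^k := by
    intro k
    induction k with
    | zero =>
      have := hrec n₀ le_rfl
      have hs := Real.sqrt_nonneg (9 - 4 * lam n₀)
      simp only [Nat.add_zero, hN, this, pow_zero, mul_one]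
      linarith
    | succ m ih =>
      have hge : N + m ≥ n₀ := by omega
      have ⟨hl0, hl9⟩ := hinv (N + m) hge
      have := hrec (N + m) hge
      obtain ⟨_, b, _⟩ := psi_facts hl0 hl9
      have : lam (N + (m+1)) ≤ lam (N + m) / 2 := by
        rw [show N + (m+1) = (N + m) + 1 by ring, hrec (N + m) hge]; exact b
      calc lam (N + (m+1)) ≤ lam (N + m) / 2 := this
        _ ≤ ((3/4) * (1/2)^m) / 2 := by linarith
        _ = (3/4) * (1/2)^(m+1) := by ring
  -- monotonicity for n ≥ n₀
  have hmono : ∀ n ≥ n₀, (6:ℝ)^n * lam n ≤ 6^(n+1) * lam (n+1) := by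
    intro n hn
    have ⟨hl0, hl9⟩ := hinv n hn
    obtain ⟨_, _, c⟩ := psi_facts hl0 hl9
    have hp : (0:ℝ) < 6^n := by positivity
    rw [hrec n hn, pow_succ]
    nlinarith
  -- boundedness
  have hbd : ∀ k : ℕ, (6:ℝ)^(N+k) * lam (N+k) ≤
      (6:ℝ)^N * lam N * Real.exp ((3/2) * (1 - (1/2)^k)) := by
    intro k
    have haN0 : (0:ℝ) ≤ 6^N * lam N :=
      mul_nonneg (by positivity) (hinv N (by omega)).1
    induction k with
    | zero => simpa using le_mul_of_one_le_right haN0 (by simpa using Real.one_le_exp (by norm_num))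
    | succ m ih =>
      have hge : N + m ≥ n₀ := by omega
      have ⟨hl0, _⟩ := hinv (N + m) hge
      have hl34 : lam (N + m) ≤ 3/4 := by
        calc lam (N+m) ≤ (3/4) * (1/2)^m := hdecay m
          _ ≤ (3/4) * 1 := by
              have : ((1:ℝ)/2)^m ≤ 1 := pow_le_one₀ (by norm_num) (by norm_num)
              nlinarith
          _ = 3/4 := by ring
      have hup := psi_upper hl0 hl34
      have hlam : lam (N + m) ≤ (3/4) * (1/2)^m := hdecay m
      have hp : (0:ℝ) < 6^(N+m) := by positivity
      have step : (6:ℝ)^(N+(m+1)) * lam (N+(m+1)) ≤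
          (6:ℝ)^(N+m) * lam (N+m) * (1 + lam (N+m)) := by
        rw [show N + (m+1) = (N + m) + 1 by ring, hrec (N + m) hge, pow_succ]
        nlinarith
      have hone : (1:ℝ) + lam (N+m) ≤ Real.exp (lam (N+m)) := by
        have := Real.add_one_le_exp (lam (N+m)); linarith
      have hx0 : (0:ℝ) ≤ 1 + lam (N+m) := by linarith
      calc (6:ℝ)^(N+(m+1)) * lam (N+(m+1))
          ≤ (6:ℝ)^(N+m) * lam (N+m) * (1 + lam (N+m)) := step
        _ ≤ ((6:ℝ)^N * lam N * Real.exp ((3/2) * (1 - (1/2)^m))) * (1 + lam (N+m)) :=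
            mul_le_mul_of_nonneg_right ih hx0
        _ ≤ ((6:ℝ)^N * lam N * Real.exp ((3/2) * (1 - (1/2)^m))) * Real.exp (lam (N+m)) := by
            apply mul_le_mul_of_nonneg_left hone
            exact mul_nonneg haN0 (Real.exp_pos _).le
        _ = (6:ℝ)^N * lam N *
            (Real.exp ((3/2) * (1 - (1/2)^m)) * Real.exp (lam (N+m))) := by ring
        _ ≤ (6:ℝ)^N * lam N * Real.exp ((3/2) * (1 - (1/2)^(m+1))) := by
            apply mul_le_mul_of_nonneg_left _ haN0
            rw [← Real.exp_add]
            apply Real.exp_le_exp.mpr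
            have : ((1:ℝ)/2)^(m+1) = (1/2)^m / 2 := by ring
            nlinarith
  -- convergence of the shifted sequence
  set g : ℕ → ℝ := fun k => (6:ℝ)^(k + N) * lam (k + N) with hg
  have hgmono : Monotone g := by
    apply monotone_nat_of_le_succ
    intro k
    have := hmono (k + N) (by omega)
    simpa [hg, show k + 1 + N = (k + N) + 1 by ring] using this
  have hgbdd : BddAbove (Set.range g) := by
    refine ⟨(6:ℝ)^N * lam N * Real.exp (3/2), ?_⟩
    rintro x ⟨k, rfl⟩
    have h1 := hbd k
    have haN0 : (0:ℝ) ≤ 6^N * lam N :=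
      mul_nonneg (by positivity) (hinv N (by omega)).1
    have h2 : Real.exp ((3/2) * (1 - (1/2)^k)) ≤ Real.exp (3/2) := by
      apply Real.exp_le_exp.mpr
      have : (0:ℝ) ≤ (1/2)^k := by positivity
      nlinarith
    calc g k = (6:ℝ)^(N + k) * lam (N + k) := by rw [hg]; ring_nf
      _ ≤ (6:ℝ)^N * lam N * Real.exp ((3/2) * (1 - (1/2)^k)) := h1
      _ ≤ (6:ℝ)^N * lam N * Real.exp (3/2) := mul_le_mul_of_nonneg_left h2 haN0
  refine ⟨⨆ k, g k, ?_⟩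
  have := tendsto_atTop_ciSup hgmono hgbdd
  exact (Filter.tendsto_add_atTop_iff_nat N).mp this
end
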